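/- Let ℓ be a positive integer. Then, in ℚ, (∑_{i=1}^{ℓ} C(ℓ, i) · C(2ℓ² − ℓ, ℓ − i)) / C(2ℓ², ℓ) ≥ 1 − (1 − 1/(2ℓ))^{ℓ}, where C(n,k) denotes the binomial coefficient. -/
import Mathlib

open Finset Nat

lemma key_term (b a : ℕ) (ha : a ≤ 2*(b+1)^2 - (b+1)) :
    a * (2*(b+1)) ≤ (a + (b+1)) * (2*(b+1) - 1) := by
  have h2 : 2*(b+1) - 1 = 2*b+1 := by omega
  have h3 : 2*(b+1)^2 = 2*b^2 + 4*b + 2 := by ring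
  have ha' : a ≤ 2*b^2 + 3*b + 1 := by omega
  rw [h2]
  nlinarith

lemma key_desc (ℓ : ℕ) (hℓ : 0 < ℓ) :
    (2*ℓ^2 - ℓ).descFactorial ℓ * (2*ℓ)^ℓ ≤ (2*ℓ^2).descFactorial ℓ * (2*ℓ-1)^ℓ := by
  rw [Nat.descFactorial_eq_prod_range, Nat.descFactorial_eq_prod_range]
  calc (∏ i ∈ range ℓ, (2*ℓ^2 - ℓ - i)) * (2*ℓ)^ℓ
      = ∏ i ∈ range ℓ, ((2*ℓ^2 - ℓ - i) * (2*ℓ)) := by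
        rw [Finset.prod_mul_distrib, Finset.prod_const, Finset.card_range]
    _ ≤ ∏ i ∈ range ℓ, ((2*ℓ^2 - i) * (2*ℓ-1)) := by
        apply Finset.prod_le_prod'
        intro i hi
        rw [Finset.mem_range] at hi
        have hsq : ℓ ≤ ℓ^2 := Nat.le_self_pow (by norm_num) ℓ
        obtain ⟨b, rfl⟩ : ∃ b, ℓ = b + 1 := ⟨ℓ - 1, by omega⟩
        have h1 : 2*(b+1)^2 - (b+1) - i ≤ 2*(b+1)^2 - (b+1) := Nat.sub_le _ _
        have h2 : 2*(b+1)^2 - i = (2*(b+1)^2 - (b+1) - i) + (b+1) := by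
          have h3 : 2*(b+1)^2 = 2*b^2 + 4*b + 2 := by ring
          omega
        rw [h2]
        exact key_term b _ h1
    _ = (∏ i ∈ range ℓ, (2*ℓ^2 - i)) * (2*ℓ-1)^ℓ := by
        rw [Finset.prod_mul_distrib, Finset.prod_const, Finset.card_range]

lemma key_nat (ℓ : ℕ) (hℓ : 0 < ℓ) :
    (2*ℓ^2 - ℓ).choose ℓ * (2*ℓ)^ℓ ≤ (2*ℓ^2).choose ℓ * (2*ℓ-1)^ℓ := by
  have h := key_desc ℓ hℓ
  rw [Nat.descFactorial_eq_factorial_mul_choose, Nat.descFactorial_eq_factorial_mul_choose,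
    mul_assoc, mul_assoc] at h
  exact Nat.le_of_mul_le_mul_left h ℓ.factorial_pos

/-- Packet-routing bound of Example 3: for a positive integer `ℓ`,
`(∑_{i=1}^ℓ C(ℓ,i) C(2ℓ²-ℓ, ℓ-i)) / C(2ℓ², ℓ) ≥ 1 - (1 - 1/(2ℓ))^ℓ` in `ℚ`. -/
theorem routing_fraction_bound (ℓ : ℕ) (hℓ : 0 < ℓ) :
    1 - (1 - 1 / (2 * (ℓ : ℚ))) ^ ℓ ≤
      (∑ i ∈ Finset.Icc 1 ℓ,
          ((ℓ.choose i * (2 * ℓ ^ 2 - ℓ).choose (ℓ - i) : ℕ) : ℚ)) /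
        (((2 * ℓ ^ 2).choose ℓ : ℕ) : ℚ) := by
  have hsq : ℓ ≤ ℓ^2 := Nat.le_self_pow (by norm_num) ℓ
  set M := 2*ℓ^2 - ℓ with hMdef
  -- Vandermonde
  have hvand : (2*ℓ^2).choose ℓ = ∑ i ∈ range (ℓ+1), ℓ.choose i * M.choose (ℓ - i) := by
    have hadd : ℓ + M = 2*ℓ^2 := by omega
    rw [← hadd, Nat.add_choose_eq, Finset.Nat.sum_antidiagonal_eq_sum_range_succ_mk]
  have hsplit : Finset.range (ℓ+1) = insert 0 (Finset.Icc 1 ℓ) := by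
    ext x; simp only [Finset.mem_range, Finset.mem_insert, Finset.mem_Icc]; omega
  have h0 : (0:ℕ) ∉ Finset.Icc 1 ℓ := by simp
  have hS : (2*ℓ^2).choose ℓ =
      M.choose ℓ + ∑ i ∈ Finset.Icc 1 ℓ, ℓ.choose i * M.choose (ℓ - i) := by
    rw [hvand, hsplit, Finset.sum_insert h0]; simp
  have hCpos : (0:ℚ) < ((2*ℓ^2).choose ℓ : ℕ) := by
    exact_mod_cast Nat.choose_pos (by omega)
  have hsum : (∑ i ∈ Finset.Icc 1 ℓ, ((ℓ.choose i * M.choose (ℓ - i) : ℕ) : ℚ))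
      = (((2*ℓ^2).choose ℓ : ℕ) : ℚ) - ((M.choose ℓ : ℕ) : ℚ) := by
    rw [← Nat.cast_sum]
    have h1 : (∑ i ∈ Finset.Icc 1 ℓ, ℓ.choose i * M.choose (ℓ - i))
        = (2*ℓ^2).choose ℓ - M.choose ℓ := by omega
    have hle : M.choose ℓ ≤ (2*ℓ^2).choose ℓ := by omega
    rw [h1]
    push_cast [hle]; ring
  rw [hsum, sub_div, div_self hCpos.ne']
  apply sub_le_sub_left
  have hp : (1 : ℚ) - 1 / (2 * (ℓ : ℚ)) = ((2*ℓ-1 : ℕ) : ℚ) / ((2*ℓ : ℕ) : ℚ) := by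
    have h1 : ((2*ℓ-1 : ℕ) : ℚ) = 2*(ℓ:ℚ) - 1 := by
      have h2 : 1 ≤ 2*ℓ := by omega
      push_cast [h2]; ring
    have hlpos : (0:ℚ) < (ℓ : ℚ) := by exact_mod_cast hℓ
    rw [h1]; push_cast; field_simp
  have h2lpos : (0:ℚ) < ((2*ℓ : ℕ) : ℚ)^ℓ := by positivity
  rw [hp, div_pow, div_le_div_iff₀ hCpos h2lpos]
  rw [← Nat.cast_pow, ← Nat.cast_pow, ← Nat.cast_mul, ← Nat.cast_mul, Nat.cast_le]
  simpa [mul_comm] using key_nat ℓ hℓ
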